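/- Let g : ℝ^p → [0,∞) be twice continuously differentiable and L-smooth for some L > 0, and let h : ℝ^p → [0,∞) be subdifferentiable. Let x⁰ ∈ ℝ^p with g(x⁰) ≠ 0, r > 0, χ := χ(g, x⁰, r), and let ε ∈ (0,1) and γ ∈ (0,ε) satisfy 4g(x⁰) < ((1−ε)/(1+γ))²·r²·χ. Let L₁ ≥ sup_{y ∈ B̄(x⁰,r)} ‖∇g(y)‖_∞, L₂ ≥ the supremum over B̄(x⁰,2r) of the absolute values of all second-order partial derivatives of g, and L_h ≥ sup{‖H‖₂ : H ∈ ∂h(y), y ∈ B̄(x⁰,r)}. Fix β_max > 0 with β_max · sup{‖H‖₂ : H ∈ ∂h(x⁰)} ≤ γ‖∇g(x⁰)‖₂, let β ∈ (0, β_max], and let α > 0 satisfy α·√p·(L₁ + β_max·L_h) < r and α·L₂·p < 2(ε−γ). Set δ := min{1, (1−ε)·χ·α} and define x^{(k+1)} := x^{(k)} − α(∇g(x^{(k)}) + β H_k) with H_k ∈ ∂h(x^{(k)}), starting from x^{(0)} = x⁰. Then for every k ≥ 1 such that β·sup{‖H‖₂ : H ∈ ∂h(x^{(j)})} ≤ γ‖∇g(x^{(j)})‖₂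 for all 0 ≤ j < k, one has: x^{(1)}, …, x^{(k)} ∈ B̄(x⁰, r); g(x^{(j)}) ≤ (1−δ)^j g(x⁰) for all 0 ≤ j ≤ k; ‖∇g(x^{(j)})‖₂² ≤ 2L·g(x^{(j)}) for all 0 ≤ j ≤ k; and ‖x^{(k)} − x^{(j)}‖₂ ≤ (1−δ)^{j/2} r for all 0 ≤ j < k. Moreover, if the domination condition β·sup{‖H‖₂ : H ∈ ∂h(x^{(j)})} ≤ γ‖∇g(x^{(j)})‖₂ holds for all j ≥ 0, then the sequence converges to a limit x* ∈ B̄(x⁰, r) with g(x*) = 0 and ∇g(x*) = 0, and ‖x^{(k)} − x*‖₂ ≤ (1−δ)^{k/2} r for all k ≥ 0. -/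

import Mathlib

/-- `z` is a subgradient of `h` at `x`. -/
def IsSubgradientAt {p : ℕ} (h : EuclideanSpace ℝ (Fin p) → ℝ)
    (z x : EuclideanSpace ℝ (Fin p)) : Prop :=
  ∀ y, h x + (inner ℝ z (y - x) : ℝ) ≤ h y

/-- The Chatterjee–Łojasiewicz constant of a differentiable function `g` (with gradient `G`)
at `x₀` with radius `r`. -/
noncomputable def chiCL {p : ℕ} (g : EuclideanSpace ℝ (Fin p) → ℝ)
    (G : EuclideanSpace ℝ (Fin p) → EuclideanSpace ℝ (Fin p))
    (x₀ : EuclideanSpace ℝ (Fin p)) (r : ℝ) : ℝ :=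
  sInf {s | ∃ y ∈ Metric.closedBall x₀ r, g y ≠ 0 ∧ s = ‖G y‖ ^ 2 / g y}


open Set

/-- Comparison: if `φ' = ψ` on `[0,1]` and `ψ t ≤ c0 + c1 t` there, then
`φ 1 ≤ φ 0 + c0 + c1/2`. -/
lemma phi_one_le {φ ψ : ℝ → ℝ} {c0 c1 : ℝ}
    (hφ : ∀ t, HasDerivAt φ (ψ t) t)
    (hb : ∀ t ∈ Icc (0:ℝ) 1, ψ t ≤ c0 + c1 * t) :
    φ 1 ≤ φ 0 + c0 + c1 / 2 := by
  set η : ℝ → ℝ := fun t => c0 * t + c1 * t ^ 2 / 2 - (φ t - φ 0) with hηdef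
  have hηd : ∀ t : ℝ, HasDerivAt η (c0 + c1 * t - ψ t) t := by
    intro t
    have h1 : HasDerivAt (fun t : ℝ => c0 * t + c1 * t ^ 2 / 2) (c0 + c1 * t) t := by
      have h2 := (hasDerivAt_id t).const_mul c0
      have h3 := ((hasDerivAt_pow 2 t).const_mul c1).div_const 2
      exact (h2.add h3).congr_deriv (by norm_num; ring)
    exact h1.sub ((hφ t).sub_const (φ 0))
  have hmono : MonotoneOn η (Icc (0:ℝ) 1) := by
    apply monotoneOn_of_deriv_nonneg (convex_Icc 0 1)
    · exact fun t _ => (hηd t).continuousAt.continuousWithinAt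
    · exact fun t _ => ((hηd t).differentiableAt).differentiableWithinAt
    · intro t ht
      rw [interior_Icc] at ht
      rw [(hηd t).deriv]
      have := hb t ⟨le_of_lt ht.1, le_of_lt ht.2⟩
      linarith
  have h01 := hmono (left_mem_Icc.2 zero_le_one) (right_mem_Icc.2 zero_le_one) zero_le_one
  simp only [hηdef] at h01
  nlinarith [h01]

/-- ℓ¹–ℓ² comparison in Euclidean space. -/
lemma sum_abs_le_sqrt_mul_norm {p : ℕ} (u : EuclideanSpace ℝ (Fin p)) :
    ∑ i, |u i| ≤ Real.sqrt p * ‖u‖ := by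
  have hn : ‖u‖ = Real.sqrt (∑ i, u i ^ 2) := by
    rw [EuclideanSpace.norm_eq]
    congr 1
    exact Finset.sum_congr rfl fun i _ => by rw [Real.norm_eq_abs, sq_abs]
  have h1 : (∑ i, |u i|) ^ 2 ≤ (p : ℝ) * ∑ i, u i ^ 2 := by
    have := sq_sum_le_card_mul_sum_sq (s := Finset.univ) (f := fun i => |u i|)
    simpa [sq_abs] using this
  have h2 : (0:ℝ) ≤ ∑ i, u i ^ 2 := Finset.sum_nonneg fun i _ => sq_nonneg _
  have h3 : ∑ i, |u i| ≤ Real.sqrt ((p : ℝ) * ∑ i, u i ^ 2) := by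
    rw [← Real.sqrt_sq (Finset.sum_nonneg fun i _ => abs_nonneg (u i))]
    exact Real.sqrt_le_sqrt h1
  rw [hn, ← Real.sqrt_mul (by positivity)]
  exact h3


open Set InnerProductSpace

/-- Quadratic upper bound along a segment from a linear bound on the derivative of the
directional derivative. -/
lemma taylor_seg {n : ℕ} {g : EuclideanSpace ℝ (Fin n) → ℝ}
    {G : EuclideanSpace ℝ (Fin n) → EuclideanSpace ℝ (Fin n)}
    (hgrad : ∀ y, HasGradientAt g (G y) y)
    (x v : EuclideanSpace ℝ (Fin n)) (M : ℝ)
    (hM : ∀ t ∈ Icc (0:ℝ) 1,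
      (inner ℝ (G (x + t • v)) v : ℝ) - inner ℝ (G x) v ≤ M * t) :
    g (x + v) ≤ g x + (inner ℝ (G x) v : ℝ) + M / 2 := by
  have hline : ∀ t : ℝ, HasDerivAt (fun s : ℝ => x + s • v) v t := by
    intro t
    simpa using ((hasDerivAt_id t).smul_const v).const_add x
  have hφ : ∀ t : ℝ, HasDerivAt (fun s => g (x + s • v))
      ((inner ℝ (G (x + t • v)) v : ℝ)) t := by
    intro t
    have h := ((hgrad (x + t • v)).hasFDerivAt).comp_hasDerivAt t (hline t)
    simp [InnerProductSpace.toDual_apply_apply] at h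
    exact h
  have := phi_one_le (φ := fun s => g (x + s • v))
    (ψ := fun t => (inner ℝ (G (x + t • v)) v : ℝ))
    (c0 := (inner ℝ (G x) v : ℝ)) (c1 := M) hφ ?_
  · simpa using this
  · intro t ht
    have := hM t ht
    linarith

/-- Nonnegative + L-smooth implies `‖∇g‖² ≤ 2 L g`. -/
lemma sq_norm_grad_le {n : ℕ} {g : EuclideanSpace ℝ (Fin n) → ℝ}
    {G : EuclideanSpace ℝ (Fin n) → EuclideanSpace ℝ (Fin n)}
    (hgrad : ∀ y, HasGradientAt g (G y) y) (hg_nonneg : ∀ y, 0 ≤ g y)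
    {L : ℝ} (hL : 0 < L) (hsmooth : ∀ a b, ‖G b - G a‖ ≤ L * ‖b - a‖)
    (y : EuclideanSpace ℝ (Fin n)) : ‖G y‖ ^ 2 ≤ 2 * L * g y := by
  set v : EuclideanSpace ℝ (Fin n) := -(L⁻¹ • G y) with hv
  have key : g (y + v) ≤ g y + (inner ℝ (G y) v : ℝ) + L * ‖v‖ ^ 2 / 2 := by
    apply taylor_seg hgrad y v (L * ‖v‖ ^ 2)
    intro t ht
    have h1 : (inner ℝ (G (y + t • v)) v : ℝ) - inner ℝ (G y) v
        = inner ℝ (G (y + t • v) - G y) v := by rw [inner_sub_left]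
    rw [h1]
    have h2 : (inner ℝ (G (y + t • v) - G y) v : ℝ) ≤ ‖G (y + t • v) - G y‖ * ‖v‖ :=
      real_inner_le_norm _ _
    have h3 : ‖G (y + t • v) - G y‖ ≤ L * (t * ‖v‖) := by
      have := hsmooth y (y + t • v)
      simpa [norm_smul, abs_of_nonneg ht.1] using this
    calc (inner ℝ (G (y + t • v) - G y) v : ℝ) ≤ ‖G (y + t • v) - G y‖ * ‖v‖ := h2
      _ ≤ L * (t * ‖v‖) * ‖v‖ := by
          apply mul_le_mul_of_nonneg_right h3 (norm_nonneg _)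
      _ = L * ‖v‖ ^ 2 * t := by ring
  have hiv : (inner ℝ (G y) v : ℝ) = -(L⁻¹ * ‖G y‖ ^ 2) := by
    rw [hv]
    rw [inner_neg_right, real_inner_smul_right, real_inner_self_eq_norm_sq]
  have hnv : ‖v‖ ^ 2 = L⁻¹ ^ 2 * ‖G y‖ ^ 2 := by
    rw [hv, norm_neg, norm_smul]
    rw [Real.norm_eq_abs, abs_of_nonneg (le_of_lt (inv_pos.2 hL))]
    ring
  have h0 := hg_nonneg (y + v)
  rw [hiv, hnv] at key
  have hL' : L⁻¹ * L = 1 := inv_mul_cancel₀ (ne_of_gt hL)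
  have e1 : L * (L⁻¹ ^ 2 * ‖G y‖ ^ 2) = L⁻¹ * ‖G y‖ ^ 2 := by
    field_simp
  rw [e1] at key
  nlinarith [key, h0, mul_pos hL hL, mul_le_mul_of_nonneg_left key (le_of_lt hL)]

lemma euclid_eq_sum_single {n : ℕ} (u : EuclideanSpace ℝ (Fin n)) :
    u = ∑ i, u i • EuclideanSpace.single i (1:ℝ) := by
  have := (EuclideanSpace.basisFun (Fin n) ℝ).sum_repr u
  simp only [EuclideanSpace.basisFun_apply, EuclideanSpace.basisFun_repr] at this
  exact this.symm

lemma bilin_abs_le {n : ℕ}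
    (B : EuclideanSpace ℝ (Fin n) →L[ℝ] EuclideanSpace ℝ (Fin n) →L[ℝ] ℝ)
    {C : ℝ} (hC : 0 ≤ C)
    (hB : ∀ i j, |B (EuclideanSpace.single i 1) (EuclideanSpace.single j 1)| ≤ C)
    (u w : EuclideanSpace ℝ (Fin n)) :
    |B u w| ≤ C * ((Real.sqrt n * ‖u‖) * (Real.sqrt n * ‖w‖)) := by
  have key : B u w = ∑ i, ∑ j, u i * w j *
      B (EuclideanSpace.single i 1) (EuclideanSpace.single j 1) := by
    have k1 : ∀ ww, B u ww = ∑ i, u i * B (EuclideanSpace.single i 1) ww := by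
      intro ww
      conv_lhs => rw [euclid_eq_sum_single u]
      rw [map_sum, ContinuousLinearMap.sum_apply]
      exact Finset.sum_congr rfl fun i _ => by
        rw [map_smul, ContinuousLinearMap.smul_apply, smul_eq_mul]
    rw [k1 w]
    refine Finset.sum_congr rfl fun i _ => ?_
    have k2 : B (EuclideanSpace.single i 1) w
        = ∑ j, w j * B (EuclideanSpace.single i 1) (EuclideanSpace.single j 1) := by
      conv_lhs => rw [euclid_eq_sum_single w]
      rw [map_sum]
      exact Finset.sum_congr rfl fun j _ => by rw [map_smul, smul_eq_mul]
    rw [k2, Finset.mul_sum]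
    exact Finset.sum_congr rfl fun j _ => by ring
  have h1 : |B u w| ≤ ∑ i, ∑ j, |u i| * |w j| * C := by
    rw [key]
    refine (Finset.abs_sum_le_sum_abs _ _).trans ?_
    refine Finset.sum_le_sum fun i _ => ?_
    refine (Finset.abs_sum_le_sum_abs _ _).trans ?_
    refine Finset.sum_le_sum fun j _ => ?_
    rw [abs_mul, abs_mul]
    exact mul_le_mul_of_nonneg_left (hB i j) (by positivity)
  have h2 : ∑ i, ∑ j, |u i| * |w j| * C = C * ((∑ i, |u i|) * (∑ j, |w j|)) := by
    rw [Finset.sum_mul_sum, Finset.mul_sum]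
    refine Finset.sum_congr rfl fun i _ => ?_
    rw [Finset.mul_sum]
    exact Finset.sum_congr rfl fun j _ => by ring
  refine h1.trans ?_
  rw [h2]
  have hu := sum_abs_le_sqrt_mul_norm u
  have hw := sum_abs_le_sqrt_mul_norm w
  have h3 : (0:ℝ) ≤ ∑ i, |u i| := Finset.sum_nonneg fun i _ => abs_nonneg _
  have h4 : (0:ℝ) ≤ ∑ j, |w j| := Finset.sum_nonneg fun j _ => abs_nonneg _
  have h5 : (0:ℝ) ≤ Real.sqrt n * ‖u‖ := by positivity
  exact mul_le_mul_of_nonneg_left (mul_le_mul hu hw h4 h5) hC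

lemma taylor_hess {n : ℕ} {g : EuclideanSpace ℝ (Fin n) → ℝ}
    {G : EuclideanSpace ℝ (Fin n) → EuclideanSpace ℝ (Fin n)}
    (hgC2 : ContDiff ℝ 2 g)
    (hgrad : ∀ y, HasGradientAt g (G y) y)
    (x v : EuclideanSpace ℝ (Fin n)) (M : ℝ) (hM0 : 0 ≤ M)
    (hM : ∀ t ∈ Icc (0:ℝ) 1, |fderiv ℝ (fderiv ℝ g) (x + t • v) v v| ≤ M) :
    g (x + v) ≤ g x + (inner ℝ (G x) v : ℝ) + M / 2 := by
  set A : EuclideanSpace ℝ (Fin n) → EuclideanSpace ℝ (Fin n) →L[ℝ] ℝ := fderiv ℝ g with hA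
  have hAg : ∀ y, A y = InnerProductSpace.toDual ℝ _ (G y) := fun y =>
    (hgrad y).hasFDerivAt.fderiv
  have hAinner : ∀ y u, A y u = (inner ℝ (G y) u : ℝ) := by
    intro y u; rw [hAg y]; rfl
  have hAdiff : Differentiable ℝ A := by
    have : ContDiff ℝ 1 A := hgC2.fderiv_right (by norm_num)
    exact this.differentiable one_ne_zero
  have hline : ∀ t : ℝ, HasDerivAt (fun s : ℝ => x + s • v) v t := by
    intro t
    simpa using ((hasDerivAt_id t).smul_const v).const_add x
  set ψ : ℝ → ℝ := fun t => A (x + t • v) v with hψ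
  have hψd : ∀ t : ℝ, HasDerivAt ψ (fderiv ℝ A (x + t • v) v v) t := by
    intro t
    have h1 : HasDerivAt (fun s : ℝ => A (x + s • v)) (fderiv ℝ A (x + t • v) v) t :=
      (hAdiff (x + t • v)).hasFDerivAt.comp_hasDerivAt t (hline t)
    have h2 := h1.clm_apply (hasDerivAt_const t v)
    simpa using h2
  have hbound : ∀ t ∈ Icc (0:ℝ) 1, ψ t - ψ 0 ≤ M * t := by
    intro t ht
    have := norm_image_sub_le_of_norm_deriv_le_segment'
      (f := ψ) (f' := fun t => fderiv ℝ A (x + t • v) v v) (C := M)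
      (fun s hs => (hψd s).hasDerivWithinAt)
      (fun s hs => by
        rw [Real.norm_eq_abs]
        exact hM s ⟨hs.1, le_of_lt hs.2⟩) t ht
    rw [Real.norm_eq_abs] at this
    have := le_of_abs_le this
    linarith
  apply taylor_seg hgrad x v M
  intro t ht
  have e0 : (inner ℝ (G (x + t • v)) v : ℝ) = ψ t := (hAinner _ _).symm
  have e1 : (inner ℝ (G x) v : ℝ) = ψ 0 := by
    rw [hψ]
    simp only [zero_smul, add_zero]
    exact (hAinner _ _).symm
  rw [e0, e1]
  exact hbound t ht

lemma sqrt_pow_nat {a : ℝ} (ha : 0 ≤ a) (j : ℕ) :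
    Real.sqrt (a ^ j) = Real.sqrt a ^ j := by
  induction j with
  | zero => simp
  | succ m ih => rw [pow_succ, pow_succ, Real.sqrt_mul (pow_nonneg ha m), ih]

lemma sqrt_pow_rpow {a : ℝ} (ha : 0 ≤ a) (j : ℕ) :
    Real.sqrt (a ^ j) = a ^ ((j : ℝ) / 2) := by
  rw [Real.sqrt_eq_rpow, ← Real.rpow_natCast a j, ← Real.rpow_mul ha]
  congr 1
  ring

/-- The core algebraic inequality for the decrement. -/
lemma decrement_algebra {a b s c ε γ : ℝ} (ha : 0 ≤ a) (hb0 : 0 ≤ b)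
    (hs1 : -(a*b) ≤ s) (hs2 : s ≤ a*b) (hbγ : b ≤ γ * a)
    (hc0 : 0 ≤ c) (hcε : c < ε - γ) (hγ0 : 0 < γ) (hγε : γ < ε) (hε1 : ε < 1) :
    (1 - ε) * a ^ 2 ≤ (1 - c) * a ^ 2 + (1 - 2*c) * s - c * b ^ 2 := by
  have h2 : a * b ≤ γ * (a * a) := by nlinarith [mul_le_mul_of_nonneg_left hbγ ha]
  have h3 : b * b ≤ (γ * γ) * (a * a) := by
    nlinarith [mul_le_mul hbγ hbγ hb0 (mul_nonneg hγ0.le ha)]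
  rcases le_or_gt c (1/2) with hc | hc
  · have key1 : -((1 - 2*c) * (a*b)) ≤ (1 - 2*c) * s := by nlinarith
    have key2 : (1 - 2*c) * (a*b) ≤ (1 - 2*c) * (γ * (a*a)) :=
      mul_le_mul_of_nonneg_left h2 (by linarith)
    have key3 : c * (b*b) ≤ c * ((γ*γ) * (a*a)) := mul_le_mul_of_nonneg_left h3 hc0
    have h1g : (1-γ)^2 ≤ 1 := by nlinarith
    have hE : 0 ≤ ε - γ - c * (1-γ)^2 := by
      nlinarith [mul_le_mul_of_nonneg_left h1g hc0]
    have hEa : 0 ≤ (ε - γ - c * (1-γ)^2) * (a*a) := mul_nonneg hE (mul_nonneg ha ha)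
    nlinarith [key1, key2, key3, hEa]
  · have key1 : (1 - 2*c) * (a*b) ≤ (1 - 2*c) * s := by nlinarith
    have key2 : (1 - 2*c) * (γ * (a*a)) ≤ (1 - 2*c) * (a*b) := by
      have := mul_le_mul_of_nonpos_left h2 (by linarith : 1 - 2*c ≤ 0)
      linarith
    have key3 : c * (b*b) ≤ c * ((γ*γ) * (a*a)) := mul_le_mul_of_nonneg_left h3 hc0
    have hscal : (ε - γ) * (1+γ)^2 ≤ ε + γ := by nlinarith [mul_nonneg hγ0.le (by linarith : (0:ℝ) ≤ 1 - ε), mul_nonneg (mul_nonneg hγ0.le hγ0.le) hγ0.le, mul_nonneg (mul_nonneg hγ0.le hγ0.le) (by linarith : (0:ℝ) ≤ 2 - ε)]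
    have hE : 0 ≤ ε + γ - c * (1+γ)^2 := by nlinarith [sq_nonneg (1+γ), mul_lt_mul_of_pos_right hcε (by positivity : (0:ℝ) < (1+γ)^2)]
    have hEa : 0 ≤ (ε + γ - c * (1+γ)^2) * (a*a) := mul_nonneg hE (mul_nonneg ha ha)
    nlinarith [key1, key2, key3, hEa]

lemma key_step {p : ℕ} (g : EuclideanSpace ℝ (Fin p) → ℝ)
    (G : EuclideanSpace ℝ (Fin p) → EuclideanSpace ℝ (Fin p))
    (hgC2 : ContDiff ℝ 2 g) (hg_nonneg : ∀ y, 0 ≤ g y)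
    (hgrad : ∀ y, HasGradientAt g (G y) y)
    (x₀ : EuclideanSpace ℝ (Fin p)) (r : ℝ)
    (L₂ : ℝ) (hL₂0 : 0 ≤ L₂)
    (hL₂ : ∀ y ∈ Metric.closedBall x₀ (2 * r), ∀ i j,
      |iteratedFDeriv ℝ 2 g y ![EuclideanSpace.single i 1, EuclideanSpace.single j 1]| ≤ L₂)
    (L χ : ℝ) (hL : 0 < L) (hχpos : 0 < χ)
    (hχg : ∀ y ∈ Metric.closedBall x₀ r, χ * g y ≤ ‖G y‖ ^ 2)
    (h2L : ∀ y, ‖G y‖ ^ 2 ≤ 2 * L * g y)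
    (ε γ α β δ : ℝ) (hε1 : ε < 1) (h1ε : 0 < 1 - ε) (hγ0 : 0 < γ) (hγε : γ < ε)
    (hα0 : 0 < α) (hβ0 : 0 < β)
    (hα2 : α * L₂ * p < 2 * (ε - γ))
    (hδle : δ ≤ (1 - ε) * χ * α) (hδ1 : δ ≤ 1)
    (K : ℝ) (hKdef : K = 2 * (1 + γ) / ((1 - ε) * Real.sqrt χ)) (hK0 : 0 < K)
    (xk xk1 Hk : EuclideanSpace ℝ (Fin p))
    (hrec1 : xk1 = xk - α • (G xk + β • Hk))
    (hball : xk ∈ Metric.closedBall x₀ r)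
    (hdom : β * ‖Hk‖ ≤ γ * ‖G xk‖)
    (hvr : ‖α • (G xk + β • Hk)‖ < r) :
    g xk1 ≤ (1 - δ) * g xk ∧
    ‖xk1 - xk‖ ≤ K * (Real.sqrt (g xk) - Real.sqrt (g xk1)) := by
  have hsχ : 0 < Real.sqrt χ := Real.sqrt_pos.2 hχpos
  set w : EuclideanSpace ℝ (Fin p) := G xk + β • Hk with hw
  set v : EuclideanSpace ℝ (Fin p) := -(α • w) with hv
  have hx1 : xk1 = xk + v := by rw [hrec1, sub_eq_add_neg]
  have hvnorm : ‖v‖ = α * ‖w‖ := by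
    rw [hv, norm_neg, norm_smul, Real.norm_eq_abs, abs_of_pos hα0]
  have hvr' : ‖v‖ < r := by
    rw [hv, norm_neg]; exact hvr
  have hr0 : 0 < r := lt_of_le_of_lt (norm_nonneg _) hvr'
  -- the segment from xk to xk1 stays in the double ball
  have hseg : ∀ t ∈ Set.Icc (0:ℝ) 1, xk + t • v ∈ Metric.closedBall x₀ (2 * r) := by
    intro t ht
    rw [Metric.mem_closedBall, dist_eq_norm]
    have e : xk + t • v - x₀ = (xk - x₀) + t • v := by abel
    rw [e]
    have h1 : ‖xk - x₀‖ ≤ r := by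
      rw [← dist_eq_norm]; exact Metric.mem_closedBall.1 hball
    have h2 : ‖t • v‖ ≤ ‖v‖ := by
      rw [norm_smul, Real.norm_eq_abs, abs_of_nonneg ht.1]
      nlinarith [norm_nonneg v, ht.2]
    calc ‖(xk - x₀) + t • v‖ ≤ ‖xk - x₀‖ + ‖t • v‖ := norm_add_le _ _
    _ ≤ 2 * r := by linarith [hvr']
  -- Hessian bound along the segment
  have hM : ∀ t ∈ Set.Icc (0:ℝ) 1,
      |fderiv ℝ (fderiv ℝ g) (xk + t • v) v v| ≤ L₂ * p * ‖v‖ ^ 2 := by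
    intro t ht
    have hB : ∀ i j, |fderiv ℝ (fderiv ℝ g) (xk + t • v)
        (EuclideanSpace.single i 1) (EuclideanSpace.single j 1)| ≤ L₂ := by
      intro i j
      have h' := hL₂ (xk + t • v) (hseg t ht) i j
      rwa [iteratedFDeriv_two_apply, Matrix.cons_val_zero, Matrix.cons_val_one,
        Matrix.cons_val_zero] at h'
    have h'' := bilin_abs_le (fderiv ℝ (fderiv ℝ g) (xk + t • v)) hL₂0 hB v v
    have e : L₂ * ((Real.sqrt p * ‖v‖) * (Real.sqrt p * ‖v‖)) = L₂ * p * ‖v‖ ^ 2 := by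
      have : Real.sqrt p * Real.sqrt p = (p : ℝ) :=
        Real.mul_self_sqrt (Nat.cast_nonneg p)
      linear_combination L₂ * ‖v‖ ^ 2 * this
    rw [e] at h''
    exact h''
  have htay : g (xk + v) ≤ g xk + (inner ℝ (G xk) v : ℝ) + (L₂ * p * ‖v‖ ^ 2) / 2 :=
    taylor_hess hgC2 hgrad xk v _ (by positivity) hM
  -- quantities
  set a : ℝ := ‖G xk‖ with ha
  set b : ℝ := β * ‖Hk‖ with hb
  set s : ℝ := β * (inner ℝ (G xk) Hk : ℝ) with hs
  have hinner : (inner ℝ (G xk) v : ℝ) = -(α * (a ^ 2 + s)) := by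
    rw [hv, inner_neg_right, real_inner_smul_right, hw, inner_add_right,
      real_inner_self_eq_norm_sq, real_inner_smul_right]
  have hwsq : ‖w‖ ^ 2 = a ^ 2 + 2 * s + b ^ 2 := by
    rw [hw, @norm_add_sq_real, real_inner_smul_right, norm_smul, Real.norm_eq_abs,
      abs_of_pos hβ0]
  have hvsq : ‖v‖ ^ 2 = α ^ 2 * ‖w‖ ^ 2 := by rw [hvnorm]; ring
  have hs_abs : |s| ≤ a * b := by
    rw [hs, abs_mul, abs_of_pos hβ0]
    calc β * |(inner ℝ (G xk) Hk : ℝ)| ≤ β * (‖G xk‖ * ‖Hk‖) :=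
          mul_le_mul_of_nonneg_left (abs_real_inner_le_norm _ _) hβ0.le
    _ = a * b := by rw [ha, hb]; ring
  obtain ⟨hs1, hs2⟩ := abs_le.1 hs_abs
  have hc0 : (0:ℝ) ≤ α * L₂ * p / 2 := by positivity
  have hcε : α * L₂ * p / 2 < ε - γ := by linarith
  have halg := decrement_algebra (norm_nonneg (G xk)) (by positivity) hs1 hs2 hdom
    hc0 hcε hγ0 hγε hε1
  -- decrement
  have hdec : g xk1 ≤ g xk - α * (1 - ε) * a ^ 2 := by
    rw [hx1]
    have e1 : g xk + (inner ℝ (G xk) v : ℝ) + (L₂ * p * ‖v‖ ^ 2) / 2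
        = g xk - α * ((1 - α * L₂ * p / 2) * a ^ 2 + (1 - 2 * (α * L₂ * p / 2)) * s
            - (α * L₂ * p / 2) * b ^ 2) := by
      rw [hinner, hvsq, hwsq]; ring
    have e2 : α * (1 - ε) * a ^ 2 ≤ α * ((1 - α * L₂ * p / 2) * a ^ 2
        + (1 - 2 * (α * L₂ * p / 2)) * s - (α * L₂ * p / 2) * b ^ 2) :=
      mul_le_mul_of_nonneg_left halg hα0.le |>.trans_eq' (by ring)
    linarith [htay, e1 ▸ htay]
  have hstep0 : 0 ≤ α * (1 - ε) * a ^ 2 := by positivity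
  have hgmono : g xk1 ≤ g xk := by linarith
  have hga : χ * g xk ≤ a ^ 2 := hχg xk hball
  -- geometric decay
  have hgeo : g xk1 ≤ (1 - δ) * g xk := by
    have h0 : α * (1 - ε) * (χ * g xk) ≤ α * (1 - ε) * a ^ 2 :=
      mul_le_mul_of_nonneg_left hga (by positivity)
    have h1 : δ * g xk ≤ α * (1 - ε) * (χ * g xk) := by
      have h2 := mul_le_mul_of_nonneg_right hδle (hg_nonneg xk)
      linarith [h2.trans_eq (by ring : ((1 - ε) * χ * α) * g xk = α * (1 - ε) * (χ * g xk))]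
    linarith
  refine ⟨hgeo, ?_⟩
  -- step-norm bound
  set A : ℝ := Real.sqrt (g xk) with hA
  set Bq : ℝ := Real.sqrt (g xk1) with hB
  have hA2 : A ^ 2 = g xk := Real.sq_sqrt (hg_nonneg xk)
  have hB2 : Bq ^ 2 = g xk1 := Real.sq_sqrt (hg_nonneg xk1)
  have hBA : Bq ≤ A := Real.sqrt_le_sqrt hgmono
  have hA0 : 0 ≤ A := Real.sqrt_nonneg _
  have hB0 : 0 ≤ Bq := Real.sqrt_nonneg _
  have hnormstep : ‖xk1 - xk‖ ≤ α * ((1 + γ) * a) := by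
    have e : xk1 - xk = v := by rw [hx1]; abel
    rw [e, hvnorm]
    have h1 : ‖w‖ ≤ a + b := by
      calc ‖w‖ ≤ ‖G xk‖ + ‖β • Hk‖ := norm_add_le _ _
      _ = a + b := by
          rw [norm_smul, Real.norm_eq_abs, abs_of_pos hβ0, ha, hb]
    have h2 : ‖w‖ ≤ (1 + γ) * a := by linarith [h1, hdom]
    exact mul_le_mul_of_nonneg_left h2 hα0.le
  rcases eq_or_lt_of_le (norm_nonneg (G xk)) with ha0 | hapos
  · -- gradient vanishes: the step is zero
    have haz : a = 0 := by rw [ha, ← ha0]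
    have h0 : ‖xk1 - xk‖ ≤ 0 := by
      have := hnormstep
      rw [haz] at this
      linarith [this]
    have hKAB : 0 ≤ K * (A - Bq) := mul_nonneg hK0.le (by linarith)
    linarith [norm_nonneg (xk1 - xk)]
  · -- gradient does not vanish
    have hapos' : 0 < a := by rw [ha]; exact hapos
    have hgkpos : 0 < g xk := by
      by_contra hng
      push_neg at hng
      have hLg : L * g xk ≤ 0 := mul_nonpos_of_nonneg_of_nonpos hL.le hng
      have hx := h2L xk
      rw [← ha] at hx
      linarith [hx, mul_pos hapos' hapos', hLg]
    have hApos : 0 < A := Real.sqrt_pos.2 hgkpos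
    have hchA : Real.sqrt χ * A ≤ a := by
      have h1 : (Real.sqrt χ * A) ^ 2 ≤ a ^ 2 := by
        rw [mul_pow, Real.sq_sqrt hχpos.le, hA2]
        exact hga
      have h2 := Real.sqrt_le_sqrt h1
      rwa [Real.sqrt_sq (by positivity), Real.sqrt_sq hapos'.le] at h2
    have hdec2 : α * (1 - ε) * a ^ 2 ≤ A ^ 2 - Bq ^ 2 := by
      rw [hA2, hB2]; linarith
    have hABle : A ^ 2 - Bq ^ 2 ≤ 2 * A * (A - Bq) := by linarith [sq_nonneg (A - Bq)]
    have h5 : α * (1 - ε) * Real.sqrt χ * a * A ≤ 2 * A * (A - Bq) := by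
      have h5a := mul_le_mul_of_nonneg_left hchA
        (by positivity : (0:ℝ) ≤ α * (1 - ε) * a)
      calc α * (1 - ε) * Real.sqrt χ * a * A
          = α * (1 - ε) * a * (Real.sqrt χ * A) := by ring
      _ ≤ α * (1 - ε) * a * a := h5a
      _ = α * (1 - ε) * a ^ 2 := by ring
      _ ≤ A ^ 2 - Bq ^ 2 := hdec2
      _ ≤ 2 * A * (A - Bq) := hABle
    have h6 : α * (1 - ε) * Real.sqrt χ * a ≤ 2 * (A - Bq) := by
      have h7 : (α * (1 - ε) * Real.sqrt χ * a) * A ≤ (2 * (A - Bq)) * A := by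
        linarith [h5]
      exact le_of_mul_le_mul_right h7 hApos
    have target : α * ((1 + γ) * a) ≤ K * (A - Bq) := by
      rw [hKdef, div_mul_eq_mul_div, le_div_iff₀ (by positivity)]
      linarith [mul_le_mul_of_nonneg_left h6 (by positivity : (0:ℝ) ≤ 1 + γ)]
    linarith [hnormstep]

/-- convergence of fixed-step subgradient descent on `g + βh` under the CL
condition, as long as the gradient of `g` dominates the subgradients of `βh`. -/
theorem regularized_descent_convergence_under_CL
    {p : ℕ} (g h : EuclideanSpace ℝ (Fin p) → ℝ)
    (G : EuclideanSpace ℝ (Fin p) → EuclideanSpace ℝ (Fin p))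
    (hgC2 : ContDiff ℝ 2 g) (hg_nonneg : ∀ x, 0 ≤ g x)
    (hgrad : ∀ x, HasGradientAt g (G x) x)
    (L : ℝ) (hL : 0 < L) (hsmooth : ∀ x y, ‖G y - G x‖ ≤ L * ‖y - x‖)
    (hh_nonneg : ∀ x, 0 ≤ h x)
    (hh_sub : ∀ x, ∃ z, IsSubgradientAt h z x)
    (x₀ : EuclideanSpace ℝ (Fin p)) (hgx₀ : g x₀ ≠ 0) (r : ℝ) (hr : 0 < r)
    (χ : ℝ) (hχ : χ = chiCL g G x₀ r)
    (ε γ : ℝ) (hε0 : 0 < ε) (hε1 : ε < 1) (hγ0 : 0 < γ) (hγε : γ < ε)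
    (hCL : 4 * g x₀ < ((1 - ε) / (1 + γ)) ^ 2 * r ^ 2 * χ)
    (L₁ L₂ Lh : ℝ)
    (hL₁ : ∀ y ∈ Metric.closedBall x₀ r, ∀ i, |G y i| ≤ L₁)
    (hL₂ : ∀ y ∈ Metric.closedBall x₀ (2 * r), ∀ i j,
      |iteratedFDeriv ℝ 2 g y ![EuclideanSpace.single i 1, EuclideanSpace.single j 1]| ≤ L₂)
    (hLh : ∀ y ∈ Metric.closedBall x₀ r, ∀ z, IsSubgradientAt h z y → ‖z‖ ≤ Lh)
    (βmax : ℝ) (hβmax : 0 < βmax)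
    (hβmax_dom : ∀ z, IsSubgradientAt h z x₀ → βmax * ‖z‖ ≤ γ * ‖G x₀‖)
    (β : ℝ) (hβ0 : 0 < β) (hβ : β ≤ βmax)
    (α : ℝ) (hα0 : 0 < α)
    (hα1 : α * Real.sqrt p * (L₁ + βmax * Lh) < r) (hα2 : α * L₂ * p < 2 * (ε - γ))
    (δ : ℝ) (hδ : δ = min 1 ((1 - ε) * χ * α))
    (x H : ℕ → EuclideanSpace ℝ (Fin p)) (hx0 : x 0 = x₀)
    (hH : ∀ k, IsSubgradientAt h (H k) (x k))
    (hrec : ∀ k, x (k + 1) = x k - α • (G (x k) + β • H k)) :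
    (∀ k : ℕ, 1 ≤ k →
      (∀ j, j < k → ∀ z, IsSubgradientAt h z (x j) → β * ‖z‖ ≤ γ * ‖G (x j)‖) →
      (∀ j, 1 ≤ j → j ≤ k → x j ∈ Metric.closedBall x₀ r) ∧
      (∀ j, j ≤ k → g (x j) ≤ (1 - δ) ^ j * g x₀) ∧
      (∀ j, j ≤ k → ‖G (x j)‖ ^ 2 ≤ 2 * L * g (x j)) ∧
      (∀ j, j < k → ‖x k - x j‖ ≤ (1 - δ) ^ ((j : ℝ) / 2) * r)) ∧
    ((∀ j : ℕ, ∀ z, IsSubgradientAt h z (x j) → β * ‖z‖ ≤ γ * ‖G (x j)‖) →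
      ∃ xstar ∈ Metric.closedBall x₀ r,
        Filter.Tendsto x Filter.atTop (nhds xstar) ∧
        g xstar = 0 ∧ G xstar = 0 ∧
        ∀ k : ℕ, ‖x k - xstar‖ ≤ (1 - δ) ^ ((k : ℝ) / 2) * r) := by
  classical
  -- dispose of the degenerate case `p = 0`
  rcases Nat.eq_zero_or_pos p with hp0 | hppos
  · exfalso
    subst hp0
    haveI : Subsingleton (EuclideanSpace ℝ (Fin 0)) :=
      ⟨fun a b => by ext i; exact Fin.elim0 i⟩
    have hGz : ∀ y : EuclideanSpace ℝ (Fin 0), ‖G y‖ = 0 := fun y => by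
      rw [Subsingleton.elim (G y) 0, norm_zero]
    have hset : {s | ∃ y ∈ Metric.closedBall x₀ r, g y ≠ 0 ∧ s = ‖G y‖ ^ 2 / g y}
        = {(0 : ℝ)} := by
      ext s
      constructor
      · rintro ⟨y, _, _, rfl⟩
        simp [hGz y]
      · rintro rfl
        exact ⟨x₀, Metric.mem_closedBall_self hr.le, hgx₀, by simp [hGz x₀]⟩
    have hχ0 : χ = 0 := by rw [hχ]; unfold chiCL; rw [hset, csInf_singleton]
    rw [hχ0, mul_zero] at hCL
    linarith [hg_nonneg x₀]
  -- basic positivity facts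
  have hgx₀pos : 0 < g x₀ := lt_of_le_of_ne (hg_nonneg x₀) (Ne.symm hgx₀)
  have h1ε : 0 < 1 - ε := by linarith
  have h1γ : 0 < 1 + γ := by linarith
  have hχpos : 0 < χ := by
    by_contra hc
    push_neg at hc
    have h1 : ((1 - ε) / (1 + γ)) ^ 2 * r ^ 2 * χ ≤ 0 := by
      have : (0:ℝ) ≤ ((1 - ε) / (1 + γ)) ^ 2 * r ^ 2 := by positivity
      exact mul_nonpos_of_nonneg_of_nonpos this hc
    linarith
  have hsχ : 0 < Real.sqrt χ := Real.sqrt_pos.2 hχpos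
  have hδ0 : 0 < δ := by
    rw [hδ]
    exact lt_min one_pos (by positivity)
  have hδ1 : δ ≤ 1 := by rw [hδ]; exact min_le_left _ _
  have h1δ0 : (0:ℝ) ≤ 1 - δ := by linarith
  have hδle : δ ≤ (1 - ε) * χ * α := by rw [hδ]; exact min_le_right _ _
  have hp1 : (1:ℝ) ≤ (p:ℝ) := by exact_mod_cast hppos
  have hsqp : (1:ℝ) ≤ Real.sqrt p := by
    have := Real.sqrt_le_sqrt hp1
    rwa [Real.sqrt_one] at this
  have hball0 : x₀ ∈ Metric.closedBall x₀ r := Metric.mem_closedBall_self hr.le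
  have hLh0 : 0 ≤ Lh := le_trans (norm_nonneg (H 0)) (hLh (x 0) (hx0 ▸ hball0) (H 0) (hH 0))
  have hL₁0 : 0 ≤ L₁ := le_trans (abs_nonneg _) (hL₁ x₀ hball0 ⟨0, hppos⟩)
  have hL₂0 : 0 ≤ L₂ := le_trans (abs_nonneg _)
    (hL₂ x₀ (Metric.mem_closedBall_self (by linarith)) ⟨0, hppos⟩ ⟨0, hppos⟩)
  -- norm of gradient bounded on the ball
  have hGnorm : ∀ y ∈ Metric.closedBall x₀ r, ‖G y‖ ≤ Real.sqrt p * L₁ := by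
    intro y hy
    have h1 : ‖G y‖ = Real.sqrt (∑ i, ‖G y i‖ ^ 2) := EuclideanSpace.norm_eq (G y)
    have h2 : ∑ i, ‖G y i‖ ^ 2 ≤ (p : ℝ) * L₁ ^ 2 := by
      calc ∑ i, ‖G y i‖ ^ 2 ≤ ∑ _i : Fin p, L₁ ^ 2 := by
            refine Finset.sum_le_sum fun i _ => ?_
            rw [Real.norm_eq_abs]
            exact pow_le_pow_left₀ (abs_nonneg _) (hL₁ y hy i) 2
      _ = (p : ℝ) * L₁ ^ 2 := by
            rw [Finset.sum_const, Finset.card_univ, Fintype.card_fin, nsmul_eq_mul]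
    calc ‖G y‖ ≤ Real.sqrt ((p:ℝ) * L₁ ^ 2) := h1 ▸ Real.sqrt_le_sqrt h2
    _ = Real.sqrt p * L₁ := by
        rw [Real.sqrt_mul (Nat.cast_nonneg p), Real.sqrt_sq hL₁0]
  -- the CL inequality on the ball
  have hχg : ∀ y ∈ Metric.closedBall x₀ r, χ * g y ≤ ‖G y‖ ^ 2 := by
    intro y hy
    by_cases hgy : g y = 0
    · rw [hgy, mul_zero]; positivity
    · have hgypos : 0 < g y := lt_of_le_of_ne (hg_nonneg y) (Ne.symm hgy)
      have hmem : ‖G y‖ ^ 2 / g y ∈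
          {s | ∃ y' ∈ Metric.closedBall x₀ r, g y' ≠ 0 ∧ s = ‖G y'‖ ^ 2 / g y'} :=
        ⟨y, hy, hgy, rfl⟩
      have hbdd : BddBelow
          {s | ∃ y' ∈ Metric.closedBall x₀ r, g y' ≠ 0 ∧ s = ‖G y'‖ ^ 2 / g y'} := by
        refine ⟨0, fun s hs => ?_⟩
        obtain ⟨y', hy', hgy', rfl⟩ := hs
        have : 0 < g y' := lt_of_le_of_ne (hg_nonneg y') (Ne.symm hgy')
        positivity
      have hle : χ ≤ ‖G y‖ ^ 2 / g y := hχ ▸ csInf_le hbdd hmem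
      calc χ * g y ≤ (‖G y‖ ^ 2 / g y) * g y := mul_le_mul_of_nonneg_right hle (hg_nonneg y)
      _ = ‖G y‖ ^ 2 := by field_simp
  have h2L : ∀ y, ‖G y‖ ^ 2 ≤ 2 * L * g y :=
    sq_norm_grad_le hgrad hg_nonneg hL hsmooth
  -- the key constant of the telescoping argument
  set K : ℝ := 2 * (1 + γ) / ((1 - ε) * Real.sqrt χ) with hKdef
  have hK0 : 0 < K := by rw [hKdef]; positivity
  have hKr : K * Real.sqrt (g x₀) < r := by
    have hsq : 2 * Real.sqrt (g x₀) * (1 + γ) < r * ((1 - ε) * Real.sqrt χ) := by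
      have hlhs : 0 ≤ 2 * Real.sqrt (g x₀) * (1 + γ) := by positivity
      have h2 : (2 * Real.sqrt (g x₀) * (1 + γ)) ^ 2 < (r * ((1 - ε) * Real.sqrt χ)) ^ 2 := by
        have e1 : (2 * Real.sqrt (g x₀) * (1 + γ)) ^ 2 = 4 * g x₀ * (1 + γ) ^ 2 := by
          rw [mul_pow, mul_pow, Real.sq_sqrt hgx₀pos.le]; ring
        have e2 : (r * ((1 - ε) * Real.sqrt χ)) ^ 2 = r ^ 2 * (1 - ε) ^ 2 * χ := by
          rw [mul_pow, mul_pow, Real.sq_sqrt hχpos.le]; ring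
        rw [e1, e2]
        have h3 : ((1 - ε) / (1 + γ)) ^ 2 * (1 + γ) ^ 2 = (1 - ε) ^ 2 := by
          rw [div_pow, div_mul_cancel₀]
          positivity
        have h4 : ((1 - ε) / (1 + γ)) ^ 2 * r ^ 2 * χ * (1 + γ) ^ 2
            = r ^ 2 * (1 - ε) ^ 2 * χ := by linear_combination (r ^ 2 * χ) * h3
        linarith [mul_lt_mul_of_pos_right hCL (by positivity : (0:ℝ) < (1 + γ) ^ 2), h4]
      exact lt_of_pow_lt_pow_left₀ 2 (by positivity) h2
    rw [hKdef, div_mul_eq_mul_div, div_lt_iff₀ (by positivity)]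
    nlinarith [hsq]
    -- step-size bound for the update vector
  have hvsmall : ∀ k, x k ∈ Metric.closedBall x₀ r → ‖α • (G (x k) + β • H k)‖ < r := by
    intro k hball
    have h1 : ‖G (x k)‖ ≤ Real.sqrt p * L₁ := hGnorm (x k) hball
    have h2 : ‖H k‖ ≤ Lh := hLh (x k) hball (H k) (hH k)
    have h3 : ‖G (x k) + β • H k‖ ≤ Real.sqrt p * L₁ + βmax * Lh := by
      calc ‖G (x k) + β • H k‖ ≤ ‖G (x k)‖ + ‖β • H k‖ := norm_add_le _ _
      _ ≤ Real.sqrt p * L₁ + βmax * Lh := by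
          rw [norm_smul, Real.norm_eq_abs, abs_of_pos hβ0]
          have h4 : β * ‖H k‖ ≤ βmax * Lh := mul_le_mul hβ h2 (norm_nonneg _) hβmax.le
          linarith
    rw [norm_smul, Real.norm_eq_abs, abs_of_pos hα0]
    have h5 : α * ‖G (x k) + β • H k‖ ≤ α * (Real.sqrt p * L₁ + βmax * Lh) :=
      mul_le_mul_of_nonneg_left h3 hα0.le
    have h6 : α * (Real.sqrt p * L₁ + βmax * Lh) ≤ α * Real.sqrt p * (L₁ + βmax * Lh) := by
      have h7 : βmax * Lh ≤ Real.sqrt p * (βmax * Lh) :=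
        le_mul_of_one_le_left (by positivity) hsqp
      have h8 : Real.sqrt p * L₁ + βmax * Lh ≤ Real.sqrt p * (L₁ + βmax * Lh) := by
        rw [mul_add]; linarith
      calc α * (Real.sqrt p * L₁ + βmax * Lh) ≤ α * (Real.sqrt p * (L₁ + βmax * Lh)) :=
            mul_le_mul_of_nonneg_left h8 hα0.le
      _ = α * Real.sqrt p * (L₁ + βmax * Lh) := by ring
    linarith
  -- the one-step estimate
  have key : ∀ k : ℕ, x k ∈ Metric.closedBall x₀ r → β * ‖H k‖ ≤ γ * ‖G (x k)‖ →
      g (x (k+1)) ≤ (1 - δ) * g (x k) ∧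
      ‖x (k+1) - x k‖ ≤ K * (Real.sqrt (g (x k)) - Real.sqrt (g (x (k+1)))) :=
    fun k hball hdom => key_step g G hgC2 hg_nonneg hgrad x₀ r L₂ hL₂0 hL₂ L χ hL hχpos
      hχg h2L ε γ α β δ hε1 h1ε hγ0 hγε hα0 hβ0 hα2 hδle hδ1 K hKdef hK0
      (x k) (x (k+1)) (H k) (hrec k) hball hdom (hvsmall k hball)
  -- telescoping distance bound
  have hdist : ∀ m j : ℕ, j ≤ m →
      (∀ i, i < m → ‖x (i+1) - x i‖ ≤ K * (Real.sqrt (g (x i)) - Real.sqrt (g (x (i+1))))) →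
      ‖x m - x j‖ ≤ K * (Real.sqrt (g (x j)) - Real.sqrt (g (x m))) := by
    intro m
    induction m with
    | zero =>
      intro j hj _
      interval_cases j
      simp
    | succ m ih =>
      intro j hj hsteps
      rcases Nat.lt_or_ge j (m+1) with hlt | hge
      · have hjm : j ≤ m := Nat.lt_succ_iff.1 hlt
        have h1 := ih j hjm (fun i hi => hsteps i (Nat.lt_succ_of_lt hi))
        have h2 := hsteps m (Nat.lt_succ_self m)
        calc ‖x (m+1) - x j‖ ≤ ‖x (m+1) - x m‖ + ‖x m - x j‖ := by
              have h3 := dist_triangle (x (m+1)) (x m) (x j)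
              simpa [dist_eq_norm] using h3
        _ ≤ K * (Real.sqrt (g (x m)) - Real.sqrt (g (x (m+1))))
              + K * (Real.sqrt (g (x j)) - Real.sqrt (g (x m))) := add_le_add h2 h1
        _ = K * (Real.sqrt (g (x j)) - Real.sqrt (g (x (m+1)))) := by ring
      · have hjm : j = m + 1 := le_antisymm hj hge
        subst hjm
        simp
  -- the main inductive invariant
  have mainInd : ∀ k : ℕ, (∀ j, j < k → β * ‖H j‖ ≤ γ * ‖G (x j)‖) →
      (∀ j, j ≤ k → x j ∈ Metric.closedBall x₀ r ∧ g (x j) ≤ (1 - δ) ^ j * g x₀) ∧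
      (∀ j, j < k → ‖x (j+1) - x j‖ ≤ K * (Real.sqrt (g (x j)) - Real.sqrt (g (x (j+1))))) := by
    intro k
    induction k with
    | zero =>
      intro _
      refine ⟨?_, fun j hj => absurd hj (Nat.not_lt_zero j)⟩
      intro j hj
      interval_cases j
      rw [hx0]
      exact ⟨hball0, by simp⟩
    | succ k ih =>
      intro hdoms
      obtain ⟨hP, hS⟩ := ih (fun j hj => hdoms j (Nat.lt_succ_of_lt hj))
      have hballk := (hP k le_rfl).1
      have hkey := key k hballk (hdoms k (Nat.lt_succ_self k))
      have hS' : ∀ j, j < k + 1 →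
          ‖x (j+1) - x j‖ ≤ K * (Real.sqrt (g (x j)) - Real.sqrt (g (x (j+1)))) := by
        intro j hj
        rcases Nat.lt_or_ge j k with hjk | hjk
        · exact hS j hjk
        · have hjeq : j = k := le_antisymm (Nat.lt_succ_iff.1 hj) hjk
          rw [hjeq]
          exact hkey.2
      refine ⟨?_, hS'⟩
      intro j hj
      rcases Nat.lt_or_ge j (k+1) with hlt | hge
      · exact hP j (Nat.lt_succ_iff.1 hlt)
      · have hjk : j = k + 1 := le_antisymm hj hge
        subst hjk
        constructor
        · rw [Metric.mem_closedBall, dist_eq_norm]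
          have hd := hdist (k+1) 0 (Nat.zero_le _) hS'
          rw [hx0] at hd
          have h1 : K * (Real.sqrt (g x₀) - Real.sqrt (g (x (k+1))))
              ≤ K * Real.sqrt (g x₀) := by
            linarith [mul_nonneg hK0.le (Real.sqrt_nonneg (g (x (k+1))))]
          linarith [hd, h1, hKr]
        · have h2 := (hP k le_rfl).2
          calc g (x (k+1)) ≤ (1 - δ) * g (x k) := hkey.1
          _ ≤ (1 - δ) * ((1 - δ) ^ k * g x₀) := mul_le_mul_of_nonneg_left h2 h1δ0
          _ = (1 - δ) ^ (k+1) * g x₀ := by ring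
  -- converting the telescoped bound to the stated form
  have hchain : ∀ j : ℕ, g (x j) ≤ (1 - δ) ^ j * g x₀ →
      K * Real.sqrt (g (x j)) ≤ (1 - δ) ^ ((j : ℝ) / 2) * r := by
    intro j hgj
    have h2 : Real.sqrt (g (x j)) ≤ Real.sqrt ((1 - δ) ^ j) * Real.sqrt (g x₀) := by
      rw [← Real.sqrt_mul (pow_nonneg h1δ0 j)]
      exact Real.sqrt_le_sqrt hgj
    have h3 : K * Real.sqrt (g (x j)) ≤ Real.sqrt ((1 - δ) ^ j) * (K * Real.sqrt (g x₀)) := by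
      calc K * Real.sqrt (g (x j)) ≤ K * (Real.sqrt ((1 - δ) ^ j) * Real.sqrt (g x₀)) :=
            mul_le_mul_of_nonneg_left h2 hK0.le
      _ = Real.sqrt ((1 - δ) ^ j) * (K * Real.sqrt (g x₀)) := by ring
    have h4 : Real.sqrt ((1 - δ) ^ j) * (K * Real.sqrt (g x₀))
        ≤ Real.sqrt ((1 - δ) ^ j) * r :=
      mul_le_mul_of_nonneg_left hKr.le (Real.sqrt_nonneg _)
    have h5 := h3.trans h4
    rwa [sqrt_pow_rpow h1δ0 j] at h5
  constructor
  · -- finite-horizon statement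
    intro k _ hdoms
    have hdoms' : ∀ j, j < k → β * ‖H j‖ ≤ γ * ‖G (x j)‖ :=
      fun j hj => hdoms j hj (H j) (hH j)
    obtain ⟨hP, hS⟩ := mainInd k hdoms'
    refine ⟨fun j _ hj => (hP j hj).1, fun j hj => (hP j hj).2,
      fun j _ => h2L (x j), ?_⟩
    intro j hj
    have hd := hdist k j hj.le hS
    have h1 : K * (Real.sqrt (g (x j)) - Real.sqrt (g (x k))) ≤ K * Real.sqrt (g (x j)) := by
      linarith [mul_nonneg hK0.le (Real.sqrt_nonneg (g (x k)))]
    exact hd.trans (h1.trans (hchain j (hP j hj.le).2))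
  · -- convergence statement
    intro hdomall
    have hdoms' : ∀ j, β * ‖H j‖ ≤ γ * ‖G (x j)‖ := fun j => hdomall j (H j) (hH j)
    have hPall : ∀ k : ℕ, x k ∈ Metric.closedBall x₀ r ∧ g (x k) ≤ (1 - δ) ^ k * g x₀ :=
      fun k => (mainInd k (fun j _ => hdoms' j)).1 k le_rfl
    have hSall : ∀ i : ℕ,
        ‖x (i+1) - x i‖ ≤ K * (Real.sqrt (g (x i)) - Real.sqrt (g (x (i+1)))) :=
      fun i => (mainInd (i+1) (fun j _ => hdoms' j)).2 i (Nat.lt_succ_self i)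
    have hρ1 : Real.sqrt (1 - δ) < 1 := by
      have := Real.sqrt_lt_sqrt h1δ0 (by linarith : 1 - δ < 1)
      rwa [Real.sqrt_one] at this
    have hstep_geo : ∀ n : ℕ,
        dist (x n) (x (n+1)) ≤ (K * Real.sqrt (g x₀)) * Real.sqrt (1 - δ) ^ n := by
      intro n
      rw [dist_eq_norm, norm_sub_rev]
      calc ‖x (n+1) - x n‖ ≤ K * (Real.sqrt (g (x n)) - Real.sqrt (g (x (n+1)))) := hSall n
      _ ≤ K * Real.sqrt (g (x n)) := by
          linarith [mul_nonneg hK0.le (Real.sqrt_nonneg (g (x (n+1))))]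
      _ ≤ K * (Real.sqrt ((1 - δ) ^ n) * Real.sqrt (g x₀)) := by
          refine mul_le_mul_of_nonneg_left ?_ hK0.le
          rw [← Real.sqrt_mul (pow_nonneg h1δ0 n)]
          exact Real.sqrt_le_sqrt (hPall n).2
      _ = (K * Real.sqrt (g x₀)) * Real.sqrt (1 - δ) ^ n := by
          rw [sqrt_pow_nat h1δ0 n]; ring
    have hcauchy : CauchySeq x :=
      cauchySeq_of_le_geometric (Real.sqrt (1 - δ)) (K * Real.sqrt (g x₀)) hρ1 hstep_geo
    obtain ⟨xstar, hxstar⟩ := cauchySeq_tendsto_of_complete hcauchy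
    have hmem : xstar ∈ Metric.closedBall x₀ r :=
      Metric.isClosed_closedBall.mem_of_tendsto hxstar
        (Filter.Eventually.of_forall fun k => (hPall k).1)
    have hgtend : Filter.Tendsto (fun k => g (x k)) Filter.atTop (nhds (g xstar)) :=
      (hgC2.continuous.tendsto xstar).comp hxstar
    have hgzero : Filter.Tendsto (fun k => g (x k)) Filter.atTop (nhds 0) := by
      have hpow : Filter.Tendsto (fun k : ℕ => (1 - δ) ^ k * g x₀) Filter.atTop (nhds 0) := by
        have := (tendsto_pow_atTop_nhds_zero_of_lt_one h1δ0 (by linarith)).mul_const (g x₀)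
        simpa using this
      exact squeeze_zero (fun k => hg_nonneg (x k)) (fun k => (hPall k).2) hpow
    have hgx : g xstar = 0 := tendsto_nhds_unique hgtend hgzero
    have hGx : G xstar = 0 := by
      have h1 := h2L xstar
      rw [hgx, mul_zero] at h1
      have h3 : ‖G xstar‖ ^ 2 = 0 := le_antisymm h1 (by positivity)
      have h2 : ‖G xstar‖ = 0 := pow_eq_zero_iff (two_ne_zero) |>.1 h3
      exact norm_eq_zero.1 h2
    have hlast : ∀ k : ℕ, ‖x k - xstar‖ ≤ (1 - δ) ^ ((k : ℝ) / 2) * r := by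
      intro k
      have hbd : ∀ m, k ≤ m → ‖x m - x k‖ ≤ (1 - δ) ^ ((k : ℝ) / 2) * r := by
        intro m hm
        have hd := hdist m k hm (fun i _ => hSall i)
        have h1 : K * (Real.sqrt (g (x k)) - Real.sqrt (g (x m)))
            ≤ K * Real.sqrt (g (x k)) := by
          linarith [mul_nonneg hK0.le (Real.sqrt_nonneg (g (x m)))]
        exact hd.trans (h1.trans (hchain k (hPall k).2))
      have htend2 : Filter.Tendsto (fun m => ‖x m - x k‖) Filter.atTop
          (nhds ‖xstar - x k‖) := (hxstar.sub tendsto_const_nhds).norm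
      have h3 := le_of_tendsto htend2 (Filter.eventually_atTop.2 ⟨k, hbd⟩)
      rwa [norm_sub_rev] at h3
    exact ⟨xstar, hmem, hxstar, hgx, hGx, hlast⟩
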